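/- A regular tetrahedron in ℝ³ with edge length √2 has width 1, where the width is the minimal distance between two parallel supporting planes. -/

import Mathlib

open scoped RealInnerProductSpace

/-- Points of `ℝ³` with the Euclidean metric. -/
def P3 (x y z : ℝ) : EuclideanSpace ℝ (Fin 3) := WithLp.toLp 2 ![x, y, z]

/-- The width of a body `K ⊆ ℝ³`: the infimum over unit directions `u` of the
breadth `sup_{x ∈ K} ⟪x, u⟫ − inf_{x ∈ K} ⟪x, u⟫`. -/
noncomputable def width (K : Set (EuclideanSpace ℝ (Fin 3))) : ℝ :=
  ⨅ u : {u : EuclideanSpace ℝ (Fin 3) // ‖u‖ = 1},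
    (sSup ((fun x => ⟪x, (u : EuclideanSpace ℝ (Fin 3))⟫) '' K) -
      sInf ((fun x => ⟪x, (u : EuclideanSpace ℝ (Fin 3))⟫) '' K))

lemma tw_pairmax (x y z : ℝ) (hx : 0 ≤ x) (hz : 0 ≤ z)
    (hxy : x ≤ y) (hzy : z ≤ y) (h : x^2+y^2+z^2 = 1) : 1 ≤ (x+y)*(y+z) := by
  nlinarith [mul_nonneg hx (sub_nonneg.2 hxy), mul_nonneg hz (sub_nonneg.2 hzy), mul_nonneg hx hz]

lemma tw_keylem (a b c d : ℝ) (h : a^2+b^2+c^2 = 1)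
    (h1 : a+b ≤ d) (h2 : -(a+b) ≤ d) (h3 : a+c ≤ d) (h4 : -(a+c) ≤ d)
    (h5 : b+c ≤ d) (h6 : -(b+c) ≤ d)
    (h7 : a-b ≤ d) (h8 : b-a ≤ d) (h9 : a-c ≤ d) (h10 : c-a ≤ d)
    (h11 : b-c ≤ d) (h12 : c-b ≤ d) : 1 ≤ d := by
  have hxy : |a| + |b| ≤ d := by
    rcases abs_cases a with ⟨e,_⟩|⟨e,_⟩ <;> rcases abs_cases b with ⟨f,_⟩|⟨f,_⟩ <;> linarith
  have hxz : |a| + |c| ≤ d := by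
    rcases abs_cases a with ⟨e,_⟩|⟨e,_⟩ <;> rcases abs_cases c with ⟨f,_⟩|⟨f,_⟩ <;> linarith
  have hyz : |b| + |c| ≤ d := by
    rcases abs_cases b with ⟨e,_⟩|⟨e,_⟩ <;> rcases abs_cases c with ⟨f,_⟩|⟨f,_⟩ <;> linarith
  have hd0 : 0 ≤ d := le_trans (by positivity) hxy
  have h' : |a|^2 + |b|^2 + |c|^2 = 1 := by rw [sq_abs, sq_abs, sq_abs]; exact h
  have h0a := abs_nonneg a; have h0b := abs_nonneg b; have h0c := abs_nonneg c
  have hdd : 1 ≤ d * d := by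
    rcases le_total |a| |b| with hab | hab
    · rcases le_total |b| |c| with hbc | hbc
      · calc 1 ≤ (|b|+|c|)*(|c|+|a|) := tw_pairmax _ _ _ h0b h0a hbc (hab.trans hbc) (by linarith)
          _ ≤ d * d := mul_le_mul (by linarith) (by linarith) (by positivity) hd0
      · calc 1 ≤ (|a|+|b|)*(|b|+|c|) := tw_pairmax _ _ _ h0a h0c hab hbc (by linarith)
          _ ≤ d * d := mul_le_mul hxy hyz (by positivity) hd0
    · rcases le_total |a| |c| with hac | hac
      · calc 1 ≤ (|b|+|c|)*(|c|+|a|) := tw_pairmax _ _ _ h0b h0a (hab.trans hac) hac (by linarith)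
          _ ≤ d * d := mul_le_mul (by linarith) (by linarith) (by positivity) hd0
      · calc 1 ≤ (|c|+|a|)*(|a|+|b|) := tw_pairmax _ _ _ h0c h0b hac hab (by linarith)
          _ ≤ d * d := mul_le_mul (by linarith) hxy (by positivity) hd0
  nlinarith

lemma tw_inner_lin (u : EuclideanSpace ℝ (Fin 3)) :
    IsLinearMap ℝ (fun x : EuclideanSpace ℝ (Fin 3) => ⟪x, u⟫) := by
  constructor
  · intro x y; exact inner_add_left x y u
  · intro c x; exact real_inner_smul_left x u c

lemma tw_hull_le (S : Set (EuclideanSpace ℝ (Fin 3))) (u : EuclideanSpace ℝ (Fin 3)) (b : ℝ)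
    (hb : ∀ v ∈ S, ⟪v, u⟫ ≤ b) :
    ∀ x ∈ convexHull ℝ S, ⟪x, u⟫ ≤ b :=
  fun _ hx => convexHull_min hb (convex_halfSpace_le (tw_inner_lin u) b) hx

lemma tw_hull_ge (S : Set (EuclideanSpace ℝ (Fin 3))) (u : EuclideanSpace ℝ (Fin 3)) (b : ℝ)
    (hb : ∀ v ∈ S, b ≤ ⟪v, u⟫) :
    ∀ x ∈ convexHull ℝ S, b ≤ ⟪x, u⟫ :=
  fun _ hx => convexHull_min hb (convex_halfSpace_ge (tw_inner_lin u) b) hx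

lemma tw_inner_P3 (x y z : ℝ) (u : EuclideanSpace ℝ (Fin 3)) :
    ⟪P3 x y z, u⟫ = x * u 0 + y * u 1 + z * u 2 := by
  simp [P3, PiLp.inner_apply, Fin.sum_univ_three]; ring

section
variable (u : EuclideanSpace ℝ (Fin 3))

abbrev tw_S : Set (EuclideanSpace ℝ (Fin 3)) := {P3 0 0 0, P3 1 1 0, P3 1 0 1, P3 0 1 1}
noncomputable abbrev tw_K : Set (EuclideanSpace ℝ (Fin 3)) := convexHull ℝ tw_S

lemma tw_breadth_ge (hu : ‖u‖ = 1) :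
    1 ≤ sSup ((fun x => ⟪x, u⟫) '' tw_K) - sInf ((fun x => ⟪x, u⟫) '' tw_K) := by
  set a := u 0; set b := u 1; set c := u 2
  have hnorm : a^2 + b^2 + c^2 = 1 := by
    have hn := EuclideanSpace.norm_eq u
    rw [hu] at hn
    have h2 : (1:ℝ)^2 = (Real.sqrt (∑ i, ‖u i‖^2))^2 := by rw [hn]
    rw [Real.sq_sqrt (by positivity)] at h2
    simpa [Fin.sum_univ_three, Real.norm_eq_abs, sq_abs, a, b, c] using h2.symm
  have e0 : ⟪P3 0 0 0, u⟫ = 0 := by rw [tw_inner_P3]; ring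
  have e1 : ⟪P3 1 1 0, u⟫ = a + b := by rw [tw_inner_P3]; ring
  have e2 : ⟪P3 1 0 1, u⟫ = a + c := by rw [tw_inner_P3]; ring
  have e3 : ⟪P3 0 1 1, u⟫ = b + c := by rw [tw_inner_P3]; ring
  set M : ℝ := max (max 0 (a+b)) (max (a+c) (b+c)) with hM
  set m : ℝ := min (min 0 (a+b)) (min (a+c) (b+c)) with hm
  have hub : ∀ v ∈ tw_S, ⟪v, u⟫ ≤ M := by
    intro v hv
    simp only [tw_S, Set.mem_insert_iff, Set.mem_singleton_iff] at hv
    rcases hv with rfl|rfl|rfl|rfl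
    · rw [e0]; exact le_max_of_le_left (le_max_left _ _)
    · rw [e1]; exact le_max_of_le_left (le_max_right _ _)
    · rw [e2]; exact le_max_of_le_right (le_max_left _ _)
    · rw [e3]; exact le_max_of_le_right (le_max_right _ _)
  have hlb : ∀ v ∈ tw_S, m ≤ ⟪v, u⟫ := by
    intro v hv
    simp only [tw_S, Set.mem_insert_iff, Set.mem_singleton_iff] at hv
    rcases hv with rfl|rfl|rfl|rfl
    · rw [e0]; exact min_le_of_left_le (min_le_left _ _)
    · rw [e1]; exact min_le_of_left_le (min_le_right _ _)
    · rw [e2]; exact min_le_of_right_le (min_le_left _ _)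
    · rw [e3]; exact min_le_of_right_le (min_le_right _ _)
  have hbdda : BddAbove ((fun x => ⟪x, u⟫) '' tw_K) := by
    refine ⟨M, ?_⟩; rintro r ⟨x, hx, rfl⟩; exact tw_hull_le _ u M hub x hx
  have hbddb : BddBelow ((fun x => ⟪x, u⟫) '' tw_K) := by
    refine ⟨m, ?_⟩; rintro r ⟨x, hx, rfl⟩; exact tw_hull_ge _ u m hlb x hx
  have hmem : ∀ v ∈ tw_S, v ∈ tw_K := fun v hv => subset_convexHull ℝ _ hv
  have hv0 : P3 0 0 0 ∈ tw_S := by simp [tw_S]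
  have hv1 : P3 1 1 0 ∈ tw_S := by simp [tw_S]
  have hv2 : P3 1 0 1 ∈ tw_S := by simp [tw_S]
  have hv3 : P3 0 1 1 ∈ tw_S := by simp [tw_S]
  have hs0 := le_csSup hbdda ⟨_, hmem _ hv0, rfl⟩
  have hs1 := le_csSup hbdda ⟨_, hmem _ hv1, rfl⟩
  have hs2 := le_csSup hbdda ⟨_, hmem _ hv2, rfl⟩
  have hs3 := le_csSup hbdda ⟨_, hmem _ hv3, rfl⟩
  have hi0 := csInf_le hbddb ⟨_, hmem _ hv0, rfl⟩
  have hi1 := csInf_le hbddb ⟨_, hmem _ hv1, rfl⟩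
  have hi2 := csInf_le hbddb ⟨_, hmem _ hv2, rfl⟩
  have hi3 := csInf_le hbddb ⟨_, hmem _ hv3, rfl⟩
  simp only [e0] at hs0 hi0
  simp only [e1] at hs1 hi1
  simp only [e2] at hs2 hi2
  simp only [e3] at hs3 hi3
  exact tw_keylem a b c _ hnorm (by linarith) (by linarith) (by linarith) (by linarith)
    (by linarith) (by linarith) (by linarith) (by linarith) (by linarith) (by linarith)
    (by linarith) (by linarith)

end

lemma tw_u0_norm : ‖P3 1 0 0‖ = 1 := by
  simp [P3, EuclideanSpace.norm_eq, Fin.sum_univ_three]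

/-- A regular tetrahedron with edge length `√2`, realized as the convex hull of
`(0,0,0), (1,1,0), (1,0,1), (0,1,1)`, has width `1`. -/
theorem regular_tetrahedron_width_one :
    width (convexHull ℝ ({P3 0 0 0, P3 1 1 0, P3 1 0 1, P3 0 1 1} :
      Set (EuclideanSpace ℝ (Fin 3)))) = 1 := by
  have : Nonempty {u : EuclideanSpace ℝ (Fin 3) // ‖u‖ = 1} := ⟨⟨P3 1 0 0, tw_u0_norm⟩⟩
  rw [width]
  apply le_antisymm
  · -- width ≤ 1 via u₀ = (1,0,0)
    have hbdd : BddBelow (Set.range fun u : {u : EuclideanSpace ℝ (Fin 3) // ‖u‖ = 1} =>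
        sSup ((fun x => ⟪x, (u : EuclideanSpace ℝ (Fin 3))⟫) '' tw_K) -
          sInf ((fun x => ⟪x, (u : EuclideanSpace ℝ (Fin 3))⟫) '' tw_K)) := by
      refine ⟨1, ?_⟩
      rintro r ⟨⟨u, hu⟩, rfl⟩
      exact tw_breadth_ge u hu
    refine le_trans (ciInf_le hbdd ⟨P3 1 0 0, tw_u0_norm⟩) ?_
    have e0 : ⟪P3 0 0 0, P3 1 0 0⟫ = 0 := by rw [tw_inner_P3]; norm_num [P3]
    have e1 : ⟪P3 1 1 0, P3 1 0 0⟫ = 1 := by rw [tw_inner_P3]; norm_num [P3]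
    have e2 : ⟪P3 1 0 1, P3 1 0 0⟫ = 1 := by rw [tw_inner_P3]; norm_num [P3]; rfl
    have e3 : ⟪P3 0 1 1, P3 1 0 0⟫ = 0 := by rw [tw_inner_P3]; norm_num [P3]; rfl
    have hub : ∀ v ∈ tw_S, ⟪v, P3 1 0 0⟫ ≤ 1 := by
      intro v hv
      simp only [tw_S, Set.mem_insert_iff, Set.mem_singleton_iff] at hv
      rcases hv with rfl|rfl|rfl|rfl <;> simp [e0, e1, e2, e3]
    have hlb : ∀ v ∈ tw_S, (0:ℝ) ≤ ⟪v, P3 1 0 0⟫ := by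
      intro v hv
      simp only [tw_S, Set.mem_insert_iff, Set.mem_singleton_iff] at hv
      rcases hv with rfl|rfl|rfl|rfl <;> simp [e0, e1, e2, e3]
    have hsup : sSup ((fun x => ⟪x, P3 1 0 0⟫) '' tw_K) = 1 := by
      apply IsGreatest.csSup_eq
      constructor
      · exact ⟨P3 1 1 0, subset_convexHull ℝ _ (by simp [tw_S]), e1⟩
      · rintro r ⟨x, hx, rfl⟩; exact tw_hull_le _ _ 1 hub x hx
    have hinf : sInf ((fun x => ⟪x, P3 1 0 0⟫) '' tw_K) = 0 := by
      apply IsLeast.csInf_eq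
      constructor
      · exact ⟨P3 0 0 0, subset_convexHull ℝ _ (by simp [tw_S]), e0⟩
      · rintro r ⟨x, hx, rfl⟩; exact tw_hull_ge _ _ 0 hlb x hx
    rw [hsup, hinf]; norm_num
  · exact le_ciInf fun ⟨u, hu⟩ => tw_breadth_ge u hu
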